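/- For every even integer l ≥ 4, the sum of ζ(l₁, l₂) over all integers l₁ ≥ 2, l₂ ≥ 1 with l₁ + l₂ = l and both l₁ and l₂ odd equals (1/4)·ζ(l). -/

import Mathlib

open scoped BigOperators
open Finset

/-- The double zeta value ζ(l₁, l₂) = ∑_{m₁ > m₂ > 0} 1/(m₁^l₁ m₂^l₂). -/
noncomputable def dzeta (l₁ l₂ : ℕ) : ℝ :=
  ∑' p : {q : ℕ+ × ℕ+ // q.2 < q.1}, 1 / ((p.1.1 : ℝ) ^ l₁ * (p.1.2 : ℝ) ^ l₂)

/-- The Riemann zeta value ζ(l) = ∑_{m ≥ 1} 1/m^l. -/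
noncomputable def zetav (l : ℕ) : ℝ := ∑' m : ℕ+, 1 / (m : ℝ) ^ l

/-- T_l(x,y) = ∑_{l₁ ≥ 2, l₂ ≥ 1, l₁+l₂=l} x^(l₁-1) y^(l₂-1) ζ(l₁,l₂). -/
noncomputable def Tl (l : ℕ) (x y : ℂ) : ℂ :=
  ∑ l₁ ∈ Finset.Icc 2 (l - 1), x ^ (l₁ - 1) * y ^ (l - l₁ - 1) * (dzeta l₁ (l - l₁) : ℂ)

noncomputable def omega : ℂ := Complex.exp (2 * Real.pi * Complex.I / 3)

namespace DZ

noncomputable def D (a b : ℕ) (p : ℕ × ℕ) : ℝ :=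
  if p.2 < p.1 then 1 / ((p.1 : ℝ) ^ a * (p.2 : ℝ) ^ b) else 0

noncomputable def g (a b : ℕ) (p : ℕ × ℕ) : ℝ :=
  1 / (((p.2 : ℝ) + p.1 + 2) ^ a * ((p.2 : ℝ) + 1) ^ b)

lemma D_nonneg (a b : ℕ) (p : ℕ × ℕ) : 0 ≤ D a b p := by
  unfold D; split <;> positivity

lemma g_nonneg (a b : ℕ) (p : ℕ × ℕ) : 0 ≤ g a b p := by unfold g; positivity

lemma dzeta_eq_D {a b : ℕ} (hb : 1 ≤ b) : dzeta a b = ∑' p : ℕ × ℕ, D a b p := by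
  classical
  set i : {q : ℕ+ × ℕ+ // q.2 < q.1} → ℕ × ℕ := fun q => ((q.1.1 : ℕ), (q.1.2 : ℕ)) with hi_def
  have hi : Function.Injective i := by
    rintro ⟨⟨m, n⟩, hq⟩ ⟨⟨m', n'⟩, hq'⟩ h
    simp only [hi_def, Prod.mk.injEq] at h
    ext <;> simp [PNat.coe_inj.mp h.1, PNat.coe_inj.mp h.2]
  have hsupp : Function.support (D a b) ⊆ Set.range i := by
    intro p hp
    simp only [Function.mem_support, D] at hp
    by_cases h : p.2 < p.1
    · rw [if_pos h] at hp
      have h2 : p.2 ≠ 0 := fun h2z => by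
        simp [h2z, zero_pow (show b ≠ 0 by omega)] at hp
      refine ⟨⟨(⟨p.1, by omega⟩, ⟨p.2, by omega⟩), by rw [← PNat.coe_lt_coe]; exact h⟩, ?_⟩
      simp [hi_def]
    · exact absurd (if_neg h) hp
  rw [dzeta, ← hi.tsum_eq hsupp]
  refine tsum_congr fun q => ?_
  have : (q.1.2 : ℕ) < (q.1.1 : ℕ) := by exact_mod_cast q.2
  simp [hi_def, D, this]

lemma D_eq_g {a b : ℕ} (hb : 1 ≤ b) :
    (∑' p : ℕ × ℕ, D a b p) = ∑' p : ℕ × ℕ, g a b p := by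
  classical
  set j : ℕ × ℕ → ℕ × ℕ := fun p => (p.2 + p.1 + 2, p.2 + 1) with hj_def
  have hj : Function.Injective j := by
    rintro ⟨k, n⟩ ⟨k', n'⟩ h
    simp only [hj_def, Prod.mk.injEq] at h
    have : n = n' := by omega
    subst this
    simp [Prod.ext_iff]; omega
  have hsupp : Function.support (D a b) ⊆ Set.range j := by
    intro p hp
    simp only [Function.mem_support, D] at hp
    by_cases h : p.2 < p.1
    · rw [if_pos h] at hp
      have h2 : p.2 ≠ 0 := fun h2z => by
        simp [h2z, zero_pow (show b ≠ 0 by omega)] at hp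
      exact ⟨(p.1 - p.2 - 1, p.2 - 1), by simp only [hj_def, Prod.ext_iff]; omega⟩
    · exact absurd (if_neg h) hp
  rw [← hj.tsum_eq hsupp]
  refine tsum_congr fun c => ?_
  have hlt : c.2 + 1 < c.2 + c.1 + 2 := by omega
  simp only [hj_def, D, if_pos hlt, g]
  push_cast
  ring_nf

lemma summable_D_of_g {a b : ℕ} (hb : 1 ≤ b) (hg : Summable (g a b)) :
    Summable (D a b) := by
  classical
  set j : ℕ × ℕ → ℕ × ℕ := fun p => (p.2 + p.1 + 2, p.2 + 1) with hj_def
  have hj : Function.Injective j := by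
    rintro ⟨k, n⟩ ⟨k', n'⟩ h
    simp only [hj_def, Prod.mk.injEq] at h
    have : n = n' := by omega
    subst this
    simp [Prod.ext_iff]; omega
  have h0 : ∀ x ∉ Set.range j, D a b x = 0 := by
    intro p hp
    by_contra hne
    apply hp
    simp only [D] at hne
    by_cases h : p.2 < p.1
    · rw [if_pos h] at hne
      have h2 : p.2 ≠ 0 := fun h2z => by
        simp [h2z, zero_pow (show b ≠ 0 by omega)] at hne
      exact ⟨(p.1 - p.2 - 1, p.2 - 1), by simp only [hj_def, Prod.ext_iff]; omega⟩
    · exact absurd (if_neg h) hne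
  refine (hj.summable_iff h0).mp ?_
  refine hg.congr fun c => ?_
  have hlt : c.2 + 1 < c.2 + c.1 + 2 := by omega
  simp only [Function.comp, hj_def, D, if_pos hlt, g]
  push_cast
  ring_nf

lemma dzeta_eq_g {a b : ℕ} (hb : 1 ≤ b) : dzeta a b = ∑' p : ℕ × ℕ, g a b p :=
  (dzeta_eq_D hb).trans (D_eq_g hb)

lemma zetav_eq_nat {l : ℕ} (hl : 1 ≤ l) : zetav l = ∑' n : ℕ, 1 / (n : ℝ) ^ l := by
  have hi : Function.Injective (fun q : ℕ+ => (q : ℕ)) := fun a b h => PNat.coe_inj.mp h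
  have hsupp : Function.support (fun n : ℕ => 1 / (n : ℝ) ^ l) ⊆
      Set.range (fun q : ℕ+ => (q : ℕ)) := by
    intro n hn
    simp only [Function.mem_support] at hn
    have : n ≠ 0 := by
      rintro rfl
      simp [zero_pow (by omega : l ≠ 0)] at hn
    exact ⟨⟨n, by omega⟩, rfl⟩
  rw [zetav, ← hi.tsum_eq hsupp]

lemma zetav_eq_succ {l : ℕ} (hl : 1 ≤ l) : zetav l = ∑' n : ℕ, 1 / ((n : ℝ) + 1) ^ l := by
  rw [zetav_eq_nat hl]
  have hi : Function.Injective (fun n : ℕ => n + 1) := add_left_injective 1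
  have hsupp : Function.support (fun n : ℕ => 1 / (n : ℝ) ^ l) ⊆
      Set.range (fun n : ℕ => n + 1) := by
    intro n hn
    simp only [Function.mem_support] at hn
    have : n ≠ 0 := by
      rintro rfl
      simp [zero_pow (by omega : l ≠ 0)] at hn
    exact ⟨n - 1, by show n - 1 + 1 = n; omega⟩
  rw [← hi.tsum_eq hsupp]
  refine (tsum_congr fun n => ?_).symm
  push_cast
  ring_nf

lemma summable_succ_pow {c : ℕ} (hc : 2 ≤ c) :
    Summable (fun n : ℕ => 1 / ((n : ℝ) + 1) ^ c) := by
  have h := (Real.summable_one_div_nat_pow (p := c)).2 (by omega)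
  have h2 := h.comp_injective (add_left_injective 1)
  refine h2.congr fun n => ?_
  simp only [Function.comp_apply]
  push_cast
  ring

noncomputable def w (c : ℕ) (p : ℕ × ℕ) : ℝ :=
  (1 / ((p.1 : ℝ) + 1) ^ 2) * (1 / ((p.2 : ℝ) + 1) ^ c)

lemma summable_w {c : ℕ} (hc : 2 ≤ c) : Summable (w c) := by
  have h := Summable.mul_of_nonneg (f := fun n : ℕ => 1 / ((n : ℝ) + 1) ^ 2)
    (g := fun n : ℕ => 1 / ((n : ℝ) + 1) ^ c) (summable_succ_pow (le_refl 2))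
    (summable_succ_pow hc) ?_ ?_
  · exact h.congr fun p => rfl
  · rw [Pi.le_def]; intro n; positivity
  · rw [Pi.le_def]; intro n; positivity


noncomputable def u (l : ℕ) (p : ℕ × ℕ) : ℝ :=
  1 / (((p.1 : ℝ) + 1) * ((p.2 : ℝ) + p.1 + 2) * ((p.2 : ℝ) + 1) ^ (l - 2))

noncomputable def v (l : ℕ) (p : ℕ × ℕ) : ℝ :=
  1 / (((p.1 : ℝ) + 1) * ((p.2 : ℝ) + p.1 + 2) ^ (l - 1))

lemma u_nonneg (l : ℕ) (p : ℕ × ℕ) : 0 ≤ u l p := by unfold u; positivity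
lemma v_nonneg (l : ℕ) (p : ℕ × ℕ) : 0 ≤ v l p := by unfold v; positivity

lemma w_eq (c : ℕ) (p : ℕ × ℕ) :
    w c p = 1 / (((p.1 : ℝ) + 1) ^ 2 * ((p.2 : ℝ) + 1) ^ c) := by
  unfold w; rw [div_mul_div_comm, one_mul]

lemma g_le_w {a b : ℕ} (ha : 2 ≤ a) (p : ℕ × ℕ) : g a b p ≤ w (a + b - 2) p := by
  rw [w_eq, g]
  set K : ℝ := (p.1 : ℝ) + 1 with hK
  set N : ℝ := (p.2 : ℝ) + 1 with hN
  have hM : (p.2 : ℝ) + p.1 + 2 = N + K := by rw [hK, hN]; ring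
  rw [hM]
  have h0K : (0 : ℝ) < K := by positivity
  have h0N : (0 : ℝ) < N := by positivity
  have hKM : K ≤ N + K := by linarith
  have hNM : N ≤ N + K := by linarith
  apply one_div_le_one_div_of_le (by positivity)
  calc K ^ 2 * N ^ (a + b - 2) = K ^ 2 * (N ^ (a - 2) * N ^ b) := by
        rw [← pow_add]; congr 2; omega
    _ ≤ (N + K) ^ 2 * ((N + K) ^ (a - 2) * N ^ b) := by gcongr
    _ = (N + K) ^ a * N ^ b := by rw [← mul_assoc, ← pow_add]; congr 2; omega

lemma u_le_w {l : ℕ} (hl : 4 ≤ l) (p : ℕ × ℕ) : u l p ≤ w (l - 2) p := by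
  rw [w_eq, u]
  set K : ℝ := (p.1 : ℝ) + 1 with hK
  set N : ℝ := (p.2 : ℝ) + 1 with hN
  have hM : (p.2 : ℝ) + p.1 + 2 = N + K := by rw [hK, hN]; ring
  rw [hM]
  have h0K : (0 : ℝ) < K := by positivity
  have h0N : (0 : ℝ) < N := by positivity
  apply one_div_le_one_div_of_le (by positivity)
  calc K ^ 2 * N ^ (l - 2) = K * K * N ^ (l - 2) := by ring
    _ ≤ K * (N + K) * N ^ (l - 2) := by gcongr; linarith

lemma v_le_w {l : ℕ} (hl : 4 ≤ l) (p : ℕ × ℕ) : v l p ≤ w (l - 2) p := by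
  rw [w_eq, v]
  set K : ℝ := (p.1 : ℝ) + 1 with hK
  set N : ℝ := (p.2 : ℝ) + 1 with hN
  have hM : (p.2 : ℝ) + p.1 + 2 = N + K := by rw [hK, hN]; ring
  rw [hM]
  have h0K : (0 : ℝ) < K := by positivity
  have h0N : (0 : ℝ) < N := by positivity
  have hKM : K ≤ N + K := by linarith
  have hNM : N ≤ N + K := by linarith
  apply one_div_le_one_div_of_le (by positivity)
  calc K ^ 2 * N ^ (l - 2) = K * (K * N ^ (l - 2)) := by ring
    _ ≤ K * ((N + K) * (N + K) ^ (l - 2)) := by gcongr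
    _ = K * (N + K) ^ (l - 1) := by rw [← pow_succ']; congr 2; omega

lemma summable_g {a b : ℕ} (ha : 2 ≤ a) (hl : 4 ≤ a + b) : Summable (g a b) :=
  Summable.of_nonneg_of_le (g_nonneg a b) (g_le_w ha) (summable_w (by omega))

lemma summable_u {l : ℕ} (hl : 4 ≤ l) : Summable (u l) :=
  Summable.of_nonneg_of_le (u_nonneg l) (u_le_w hl) (summable_w (by omega))

lemma summable_v {l : ℕ} (hl : 4 ≤ l) : Summable (v l) :=
  Summable.of_nonneg_of_le (v_nonneg l) (v_le_w hl) (summable_w (by omega))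

lemma summable_D {a b : ℕ} (ha : 2 ≤ a) (hb : 1 ≤ b) (hl : 4 ≤ a + b) :
    Summable (D a b) :=
  summable_D_of_g hb (summable_g ha hl)

/-! ### Harmonic numbers -/

noncomputable def hh (n : ℕ) : ℝ := ∑ j ∈ Finset.range n, 1 / ((j : ℝ) + 1)

lemma hh_zero : hh 0 = 0 := by simp [hh]

lemma hh_succ (n : ℕ) : hh (n + 1) = hh n + 1 / ((n : ℝ) + 1) := Finset.sum_range_succ _ n

lemma hh_nonneg (n : ℕ) : 0 ≤ hh n := by
  unfold hh
  apply Finset.sum_nonneg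
  intro j _
  positivity

lemma hh_le (n : ℕ) : hh n ≤ n := by
  induction n with
  | zero => simp [hh_zero]
  | succ n ih =>
    rw [hh_succ]
    push_cast
    have : 1 / ((n : ℝ) + 1) ≤ 1 := by
      rw [div_le_one (by positivity)]; linarith [Nat.cast_nonneg (α := ℝ) n]
    linarith

lemma hh_partial (n K : ℕ) :
    ∑ k ∈ Finset.range K, 1 / (((k : ℝ) + 1) * ((k : ℝ) + n + 2)) =
      (hh K - hh (K + n + 1) + hh (n + 1)) / ((n : ℝ) + 1) := by
  induction K with
  | zero => simp [hh_zero]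
  | succ K ih =>
    rw [Finset.sum_range_succ, ih]
    have hs1 : hh (K + 1) = hh K + 1 / ((K : ℝ) + 1) := hh_succ K
    have hs2 : hh (K + 1 + n + 1) = hh (K + n + 1) + 1 / ((K : ℝ) + n + 2) := by
      have e1 : K + 1 + n + 1 = (K + n + 1) + 1 := by omega
      rw [e1, hh_succ]
      congr 1
      push_cast; ring
    rw [hs1, hs2]
    have h1 : ((K : ℝ) + 1) ≠ 0 := by positivity
    have h2 : ((K : ℝ) + n + 2) ≠ 0 := by positivity
    have h3 : ((n : ℝ) + 1) ≠ 0 := by positivity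
    field_simp
    ring

lemma hh_diff (K n : ℕ) : hh (K + n) - hh K = ∑ j ∈ Finset.range n, 1 / ((K : ℝ) + j + 1) := by
  induction n with
  | zero => simp
  | succ n ih =>
    have : K + (n + 1) = (K + n) + 1 := by omega
    rw [this, hh_succ, Finset.sum_range_succ, ← ih]
    have : ((K + n : ℕ) : ℝ) = (K : ℝ) + n := by push_cast; ring
    rw [this]
    ring

lemma tendsto_hh_err (n : ℕ) :
    Filter.Tendsto (fun K : ℕ => hh (K + n) - hh K) Filter.atTop (nhds 0) := by
  have : ∀ K : ℕ, hh (K + n) - hh K = ∑ j ∈ Finset.range n, 1 / ((K : ℝ) + j + 1) :=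
    fun K => hh_diff K n
  rw [funext this]
  have h0 : (0 : ℝ) = ∑ j ∈ Finset.range n, (0 : ℝ) := by simp
  rw [h0]
  apply tendsto_finset_sum
  intro j _
  have h1 : Filter.Tendsto (fun K : ℕ => (K : ℝ) + j + 1) Filter.atTop Filter.atTop := by
    apply Filter.tendsto_atTop_add_const_right
    apply Filter.tendsto_atTop_add_const_right
    exact tendsto_natCast_atTop_atTop
  simpa [one_div, Pi.inv_def] using h1.inv_tendsto_atTop

lemma hasSum_harm (n : ℕ) :
    HasSum (fun k : ℕ => 1 / (((k : ℝ) + 1) * ((k : ℝ) + n + 2)))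
      (hh (n + 1) / ((n : ℝ) + 1)) := by
  rw [hasSum_iff_tendsto_nat_of_nonneg (fun k => by positivity)]
  have hfun : (fun K : ℕ => ∑ k ∈ Finset.range K, 1 / (((k : ℝ) + 1) * ((k : ℝ) + n + 2))) =
      fun K : ℕ => (hh K - hh (K + n + 1) + hh (n + 1)) / ((n : ℝ) + 1) := by
    funext K; exact hh_partial n K
  rw [hfun]
  have key : Filter.Tendsto (fun K : ℕ => hh K - hh (K + n + 1) + hh (n + 1))
      Filter.atTop (nhds (hh (n + 1))) := by
    have h1 := tendsto_hh_err (n + 1)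
    have h2 : (fun K : ℕ => hh K - hh (K + n + 1) + hh (n + 1)) =
        fun K : ℕ => hh (n + 1) - (hh (K + (n + 1)) - hh K) := by
      funext K; have : K + n + 1 = K + (n + 1) := by omega
      rw [this]; ring
    rw [h2]
    have := (tendsto_const_nhds (x := hh (n + 1)) (f := Filter.atTop (α := ℕ))).sub h1
    simpa using this
  exact key.div_const _

/-! ### Partial fractions -/

lemma pf (l : ℕ) (hl : 3 ≤ l) (N K : ℝ) (hN : 0 < N) (hK : 0 < K) :
    ∑ a ∈ Finset.Icc 2 (l - 1), 1 / ((N + K) ^ a * N ^ (l - a)) =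
      1 / (K * (N + K) * N ^ (l - 2)) - 1 / (K * (N + K) ^ (l - 1)) := by
  have hM : (0 : ℝ) < N + K := by linarith
  induction l with
  | zero => omega
  | succ l ih =>
    rcases Nat.lt_or_ge l 3 with hl3 | hl3
    · -- l + 1 = 3, base case
      have : l = 2 := by omega
      subst this
      norm_num
      field_simp
      ring
    · -- inductive step
      have ih' := ih (by omega)
      have e1 : l + 1 - 1 = l := by omega
      rw [e1]
      have e2 : Finset.Icc 2 l = insert l (Finset.Icc 2 (l - 1)) := by
        ext x
        simp only [Finset.mem_Icc, Finset.mem_insert]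
        omega
      rw [e2, Finset.sum_insert (by simp only [Finset.mem_Icc]; omega)]
      have e3 : ∀ a ∈ Finset.Icc 2 (l - 1),
          1 / ((N + K) ^ a * N ^ (l + 1 - a)) =
            (1 / ((N + K) ^ a * N ^ (l - a))) * (1 / N) := by
        intro a ha
        simp only [Finset.mem_Icc] at ha
        have : l + 1 - a = (l - a) + 1 := by omega
        rw [this, pow_succ]
        rw [div_mul_div_comm, one_mul]
        ring_nf
      rw [Finset.sum_congr rfl e3, ← Finset.sum_mul, ih']
      have e4 : l + 1 - l = 1 := by omega
      rw [e4]
      have e5 : (N + K) ^ l = (N + K) ^ (l - 1) * (N + K) := by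
        rw [← pow_succ]; congr 1; omega
      have e6 : N ^ (l - 1) = N ^ (l - 2) * N := by
        rw [← pow_succ]; congr 1; omega
      have e7 : l + 1 - 2 = l - 1 := by omega
      rw [e5, e7, e6]
      have h1 : N ≠ 0 := ne_of_gt hN
      have h2 : K ≠ 0 := ne_of_gt hK
      have h3 : (N + K) ≠ 0 := ne_of_gt hM
      have h4 : (N + K) ^ (l - 1) ≠ 0 := pow_ne_zero _ h3
      have h5 : N ^ (l - 2) ≠ 0 := pow_ne_zero _ h1
      field_simp
      ring

lemma sum_inv_range (m : ℕ) : ∑ j ∈ Finset.range m, 1 / (j : ℝ) = hh (m - 1) := by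
  induction m with
  | zero => simp [hh_zero]
  | succ m ih =>
    rw [Finset.sum_range_succ, ih]
    cases m with
    | zero => simp [hh_zero]
    | succ m' =>
      simp only [Nat.add_sub_cancel]
      rw [hh_succ]
      push_cast
      ring

lemma dzeta_top (l : ℕ) (hl : 4 ≤ l) :
    dzeta (l - 1) 1 = ∑' n : ℕ, hh n * (1 / ((n : ℝ) + 1) ^ (l - 1)) := by
  rw [dzeta_eq_D (le_refl 1)]
  have hsum : Summable (D (l - 1) 1) := summable_D (by omega) (le_refl 1) (by omega)
  have hfib : ∀ m : ℕ, Summable (fun j => D (l - 1) 1 (m, j)) := by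
    intro m
    apply summable_of_ne_finset_zero (s := Finset.range m)
    intro j hj
    simp only [Finset.mem_range, not_lt] at hj
    simp [D, Nat.not_lt.mpr hj]
  rw [Summable.tsum_prod' hsum hfib]
  have hinner : ∀ m : ℕ, (∑' j : ℕ, D (l - 1) 1 (m, j)) = (1 / (m : ℝ) ^ (l - 1)) * hh (m - 1) := by
    intro m
    rw [tsum_eq_sum (s := Finset.range m) (fun j hj => by
      simp only [Finset.mem_range, not_lt] at hj
      simp [D, Nat.not_lt.mpr hj])]
    have : ∀ j ∈ Finset.range m, D (l - 1) 1 (m, j) = (1 / (m : ℝ) ^ (l - 1)) * (1 / (j : ℝ)) := by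
      intro j hj
      simp only [Finset.mem_range] at hj
      simp only [D, if_pos hj, pow_one]
      rw [div_mul_div_comm, one_mul]
    rw [Finset.sum_congr rfl this, ← Finset.mul_sum, sum_inv_range]
  rw [tsum_congr hinner]
  have hi : Function.Injective (fun n : ℕ => n + 1) := add_left_injective 1
  have hsupp : Function.support (fun m : ℕ => (1 / (m : ℝ) ^ (l - 1)) * hh (m - 1)) ⊆
      Set.range (fun n : ℕ => n + 1) := by
    intro m hm
    simp only [Function.mem_support] at hm
    have : m ≠ 0 := by
      rintro rfl
      simp [zero_pow (show l - 1 ≠ 0 by omega)] at hm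
    exact ⟨m - 1, by show m - 1 + 1 = m; omega⟩
  rw [← hi.tsum_eq hsupp]
  refine tsum_congr fun n => ?_
  show (1 / ((n + 1 : ℕ) : ℝ) ^ (l - 1)) * hh (n + 1 - 1) = hh n * (1 / ((n : ℝ) + 1) ^ (l - 1))
  rw [Nat.add_sub_cancel]
  push_cast
  ring

lemma tsum_v_eq (l : ℕ) (hl : 4 ≤ l) : ∑' p : ℕ × ℕ, v l p = dzeta (l - 1) 1 := by
  rw [dzeta_eq_g (le_refl 1)]
  rw [← (Equiv.prodComm ℕ ℕ).tsum_eq (v l)]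
  refine (tsum_congr fun p => ?_).symm
  show g (l - 1) 1 p = v l (p.2, p.1)
  unfold g v
  simp only [pow_one]
  congr 1
  ring

lemma u_factor (l : ℕ) (k n : ℕ) :
    u l (k, n) = (1 / ((n : ℝ) + 1) ^ (l - 2)) * (1 / (((k : ℝ) + 1) * ((k : ℝ) + n + 2))) := by
  unfold u
  rw [div_mul_div_comm, one_mul]
  congr 1
  push_cast
  ring

lemma hasSum_u_fiber (l : ℕ) (n : ℕ) :
    HasSum (fun k : ℕ => u l (k, n))
      ((1 / ((n : ℝ) + 1) ^ (l - 2)) * (hh (n + 1) / ((n : ℝ) + 1))) := by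
  have h := (hasSum_harm n).mul_left (1 / ((n : ℝ) + 1) ^ (l - 2))
  have e : (fun k : ℕ => u l (k, n)) = fun k : ℕ =>
      (1 / ((n : ℝ) + 1) ^ (l - 2)) * (1 / (((k : ℝ) + 1) * ((k : ℝ) + n + 2))) :=
    funext fun k => u_factor l k n
  rw [e]
  exact h

lemma summable_E (l : ℕ) (hl : 4 ≤ l) :
    Summable (fun n : ℕ => hh n * (1 / ((n : ℝ) + 1) ^ (l - 1))) := by
  refine Summable.of_nonneg_of_le (fun n => by have := hh_nonneg n; positivity)
    (fun n => ?_) (summable_succ_pow (c := l - 2) (by omega))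
  have hx : (0 : ℝ) < (n : ℝ) + 1 := by positivity
  have h1 : hh n ≤ (n : ℝ) + 1 := by have := hh_le n; linarith
  have e1 : ((n : ℝ) + 1) ^ (l - 1) = ((n : ℝ) + 1) * ((n : ℝ) + 1) ^ (l - 2) := by
    rw [← pow_succ']; congr 1; omega
  calc hh n * (1 / ((n : ℝ) + 1) ^ (l - 1)) ≤ ((n : ℝ) + 1) * (1 / ((n : ℝ) + 1) ^ (l - 1)) := by
        apply mul_le_mul_of_nonneg_right h1 (by positivity)
    _ = 1 / ((n : ℝ) + 1) ^ (l - 2) := by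
        rw [e1]
        field_simp
    _ ≤ 1 / ((n : ℝ) + 1) ^ (l - 2) := le_refl _

lemma tsum_u_eq (l : ℕ) (hl : 4 ≤ l) :
    ∑' p : ℕ × ℕ, u l p = dzeta (l - 1) 1 + zetav l := by
  have hsum : Summable (fun c : ℕ × ℕ => u l (c.2, c.1)) := by
    have := (Equiv.prodComm ℕ ℕ).summable_iff.mpr (summable_u hl)
    refine this.congr fun c => rfl
  rw [← (Equiv.prodComm ℕ ℕ).tsum_eq (u l)]
  have step1 : (∑' c : ℕ × ℕ, u l (c.2, c.1)) =
      ∑' n : ℕ, ((1 / ((n : ℝ) + 1) ^ (l - 2)) * (hh (n + 1) / ((n : ℝ) + 1))) := by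
    rw [Summable.tsum_prod' hsum (fun n => (hasSum_u_fiber l n).summable)]
    exact tsum_congr fun n => (hasSum_u_fiber l n).tsum_eq
  have step0 : (∑' c : ℕ × ℕ, u l ((Equiv.prodComm ℕ ℕ) c)) = ∑' c : ℕ × ℕ, u l (c.2, c.1) :=
    tsum_congr fun c => rfl
  rw [step0, step1]
  have key : ∀ n : ℕ, (1 / ((n : ℝ) + 1) ^ (l - 2)) * (hh (n + 1) / ((n : ℝ) + 1)) =
      hh n * (1 / ((n : ℝ) + 1) ^ (l - 1)) + 1 / ((n : ℝ) + 1) ^ l := by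
    intro n
    rw [hh_succ]
    have hx : ((n : ℝ) + 1) ≠ 0 := by positivity
    have e1 : ((n : ℝ) + 1) ^ (l - 1) = ((n : ℝ) + 1) ^ (l - 2) * ((n : ℝ) + 1) := by
      rw [← pow_succ]; congr 1; omega
    have e2 : ((n : ℝ) + 1) ^ l = ((n : ℝ) + 1) ^ (l - 2) * ((n : ℝ) + 1) ^ 2 := by
      rw [← pow_add]; congr 1; omega
    rw [e1, e2]
    field_simp
  rw [tsum_congr key, Summable.tsum_add (summable_E l hl) (summable_succ_pow (by omega))]
  rw [dzeta_top l hl, zetav_eq_succ (by omega)]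

theorem sum_formula (l : ℕ) (hl : 4 ≤ l) :
    ∑ a ∈ Finset.Icc 2 (l - 1), dzeta a (l - a) = zetav l := by
  have hstep : ∀ a ∈ Finset.Icc 2 (l - 1), dzeta a (l - a) = ∑' p : ℕ × ℕ, g a (l - a) p := by
    intro a ha
    simp only [Finset.mem_Icc] at ha
    exact dzeta_eq_g (by omega)
  rw [Finset.sum_congr rfl hstep]
  have hsummable : ∀ a ∈ Finset.Icc 2 (l - 1), Summable (g a (l - a)) := by
    intro a ha
    simp only [Finset.mem_Icc] at ha
    exact summable_g (by omega) (by omega : 4 ≤ a + (l - a))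
  rw [← Summable.tsum_finsetSum hsummable]
  have hpt : ∀ p : ℕ × ℕ, (∑ a ∈ Finset.Icc 2 (l - 1), g a (l - a) p) = u l p - v l p := by
    intro p
    have hN : (0 : ℝ) < (p.2 : ℝ) + 1 := by positivity
    have hK : (0 : ℝ) < (p.1 : ℝ) + 1 := by positivity
    have hpf := pf l (by omega) ((p.2 : ℝ) + 1) ((p.1 : ℝ) + 1) hN hK
    have eg : ∀ a ∈ Finset.Icc 2 (l - 1), g a (l - a) p =
        1 / ((((p.2 : ℝ) + 1) + ((p.1 : ℝ) + 1)) ^ a * ((p.2 : ℝ) + 1) ^ (l - a)) := by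
      intro a _
      unfold g
      congr 3
      ring
    have eu : u l p = 1 / ((((p.1 : ℝ) + 1)) * ((((p.2 : ℝ) + 1) + ((p.1 : ℝ) + 1))) *
        ((p.2 : ℝ) + 1) ^ (l - 2)) := by
      unfold u; congr 1; ring
    have ev : v l p = 1 / (((p.1 : ℝ) + 1) * (((p.2 : ℝ) + 1) + ((p.1 : ℝ) + 1)) ^ (l - 1)) := by
      unfold v; congr 1; ring
    rw [Finset.sum_congr rfl eg, hpf, eu, ev]
  rw [tsum_congr hpt, Summable.tsum_sub (summable_u hl) (summable_v hl), tsum_u_eq l hl, tsum_v_eq l hl]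
  ring

lemma stuffle {a b : ℕ} (ha : 2 ≤ a) (hb : 2 ≤ b) :
    zetav a * zetav b = dzeta a b + dzeta b a + zetav (a + b) := by
  classical
  set P : ℕ × ℕ → ℝ := fun p => (1 / (p.1 : ℝ) ^ a) * (1 / (p.2 : ℝ) ^ b) with hP_def
  have hza : Summable (fun n : ℕ => 1 / (n : ℝ) ^ a) :=
    Real.summable_one_div_nat_pow.2 (by omega)
  have hzb : Summable (fun n : ℕ => 1 / (n : ℝ) ^ b) :=
    Real.summable_one_div_nat_pow.2 (by omega)
  have hP : Summable P := by
    have h := Summable.mul_of_nonneg (f := fun n : ℕ => 1 / (n : ℝ) ^ a)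
      (g := fun n : ℕ => 1 / (n : ℝ) ^ b) hza hzb ?_ ?_
    · exact h.congr fun p => rfl
    · rw [Pi.le_def]; intro n; positivity
    · rw [Pi.le_def]; intro n; positivity
  have hPnn : ∀ p, 0 ≤ P p := fun p => by rw [hP_def]; dsimp only; positivity
  have hsplit : ∀ (c : ℕ × ℕ → Prop) (_ : DecidablePred c),
      Summable (fun p => if c p then P p else 0) := by
    intro c hc
    refine Summable.of_nonneg_of_le (fun p => ?_) (fun p => ?_) hP
    · split
      exacts [hPnn p, le_refl 0]
    · split
      exacts [le_refl _, hPnn p]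
  have hslt := hsplit (fun p => p.2 < p.1) (fun p => inferInstance)
  have hsgt := hsplit (fun p => p.1 < p.2) (fun p => inferInstance)
  have hsdg := hsplit (fun p => p.1 = p.2) (fun p => inferInstance)
  have hdecomp : ∀ p : ℕ × ℕ, P p =
      (if p.2 < p.1 then P p else 0) +
        ((if p.1 < p.2 then P p else 0) + (if p.1 = p.2 then P p else 0)) := by
    intro p
    rcases lt_trichotomy p.2 p.1 with h | h | h
    · rw [if_pos h, if_neg (by omega), if_neg (by omega)]; ring
    · rw [if_neg (by omega), if_neg (by omega), if_pos (by omega)]; ring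
    · rw [if_neg (by omega), if_pos h, if_neg (by omega)]; ring
  have hmain : zetav a * zetav b = ∑' p : ℕ × ℕ, P p := by
    rw [zetav_eq_nat (by omega), zetav_eq_nat (by omega)]
    exact Summable.tsum_mul_tsum hza hzb hP
  rw [hmain, tsum_congr hdecomp, Summable.tsum_add hslt (hsgt.add hsdg), Summable.tsum_add hsgt hsdg]
  have hlt_eq : (∑' p : ℕ × ℕ, if p.2 < p.1 then P p else 0) = dzeta a b := by
    rw [dzeta_eq_D (by omega : 1 ≤ b)]
    refine tsum_congr fun p => ?_
    rw [hP_def, D]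
    dsimp only
    split
    · rw [div_mul_div_comm, one_mul]
    · rfl
  have hgt_eq : (∑' p : ℕ × ℕ, if p.1 < p.2 then P p else 0) = dzeta b a := by
    rw [dzeta_eq_D (by omega : 1 ≤ a)]
    rw [← (Equiv.prodComm ℕ ℕ).tsum_eq (fun p : ℕ × ℕ => if p.1 < p.2 then P p else 0)]
    refine tsum_congr fun c => ?_
    show (if c.2 < c.1 then P (c.2, c.1) else 0) = D b a c
    rw [hP_def, D]
    dsimp only
    split
    · rw [div_mul_div_comm, one_mul, mul_comm]
    · rfl
  have hdg_eq : (∑' p : ℕ × ℕ, if p.1 = p.2 then P p else 0) = zetav (a + b) := by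
    rw [zetav_eq_nat (by omega : 1 ≤ a + b)]
    have hi : Function.Injective (fun m : ℕ => ((m, m) : ℕ × ℕ)) := by
      intro x y h
      simpa [Prod.ext_iff] using h
    have hsupp : Function.support (fun p : ℕ × ℕ => if p.1 = p.2 then P p else 0) ⊆
        Set.range (fun m : ℕ => ((m, m) : ℕ × ℕ)) := by
      intro p hp
      simp only [Function.mem_support] at hp
      by_cases h : p.1 = p.2
      · exact ⟨p.1, by simp [Prod.ext_iff, h]⟩
      · exact absurd (if_neg h) hp
    rw [← hi.tsum_eq hsupp]
    refine tsum_congr fun m => ?_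
    show (if m = m then P (m, m) else 0) = 1 / (m : ℝ) ^ (a + b)
    rw [if_pos rfl, hP_def]
    dsimp only
    rw [div_mul_div_comm, one_mul, ← pow_add]
  rw [hlt_eq, hgt_eq, hdg_eq]
  ring

section Bernoulli

open PowerSeries

lemma exp_sub_one_ne_zero : (exp ℚ - 1 : ℚ⟦X⟧) ≠ 0 := by
  intro h
  have h1 := congrArg (coeff 1) h
  simp [coeff_exp, coeff_one] at h1

lemma derivative_exp_sub_one : d⁄dX ℚ (exp ℚ - 1) = exp ℚ := by
  ext m
  rw [coeff_derivative]
  rw [map_sub, coeff_exp, coeff_exp, coeff_one]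
  simp only [Nat.succ_ne_zero, if_false, sub_zero]
  have h1 : (Nat.factorial (m + 1) : ℚ) = (m + 1) * Nat.factorial m := by exact_mod_cast Nat.factorial_succ m
  have h2 : (Nat.factorial m : ℚ) ≠ 0 := Nat.cast_ne_zero.2 (Nat.factorial_ne_zero m)
  have h3 : ((m : ℚ) + 1) ≠ 0 := by positivity
  simp only [Algebra.algebraMap_self, RingHom.id_apply]
  rw [h1]
  push_cast
  field_simp

lemma bernoulli_quadratic (n : ℕ) (hn : 1 ≤ n) :
    ∑ k ∈ Finset.range (n + 1), (n.choose k : ℚ) * bernoulli k * bernoulli (n - k) =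
      (1 - (n : ℚ)) * bernoulli n - (n : ℚ) * bernoulli (n - 1) := by
  classical
  set B : ℚ⟦X⟧ := bernoulliPowerSeries ℚ with hB_def
  set B' : ℚ⟦X⟧ := d⁄dX ℚ B with hB'_def
  have hB : B * (exp ℚ - 1) = X := bernoulliPowerSeries_mul_exp_sub_one ℚ
  have hd : B * (d⁄dX ℚ (exp ℚ - 1)) + (exp ℚ - 1) * B' = 1 := by
    have h := congrArg (d⁄dX ℚ) hB
    rwa [Derivation.leibniz, derivative_X, smul_eq_mul, smul_eq_mul] at h
  rw [derivative_exp_sub_one] at hd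
  have hB' : (exp ℚ - 1) * B' = 1 - B * exp ℚ := by linear_combination hd
  have key : B * B = (1 - X) * B - X * B' := by
    have h2 : ((exp ℚ - 1 : ℚ⟦X⟧)) ^ 2 ≠ 0 := pow_ne_zero 2 exp_sub_one_ne_zero
    apply mul_right_cancel₀ h2
    have e1 : ((1 - X) * B - X * B') * (exp ℚ - 1) ^ 2
        = (1 - X) * (B * (exp ℚ - 1)) * (exp ℚ - 1) - X * ((exp ℚ - 1) * B') * (exp ℚ - 1) := by
      ring
    calc B * B * (exp ℚ - 1) ^ 2 = (B * (exp ℚ - 1)) * (B * (exp ℚ - 1)) := by ring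
      _ = X * X := by rw [hB]
      _ = ((1 - X) * B - X * B') * (exp ℚ - 1) ^ 2 := ?_
    rw [e1, hB, hB']
    have e2 : (1 - X) * X * (exp ℚ - 1) - X * (1 - B * exp ℚ) * (exp ℚ - 1)
        = - (X * X) * (exp ℚ - 1) + X * exp ℚ * (B * (exp ℚ - 1)) := by ring
    rw [e2, hB]
    ring
  obtain ⟨m, rfl⟩ : ∃ m, n = m + 1 := ⟨n - 1, by omega⟩
  have hco := congrArg (coeff (m + 1)) key
  rw [coeff_mul] at hco
  have e3 : (1 - X : ℚ⟦X⟧) * B - X * B' = B - X * B - X * B' := by ring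
  rw [e3, map_sub, map_sub, coeff_succ_X_mul, coeff_succ_X_mul, hB'_def, coeff_derivative] at hco
  simp only [hB_def, bernoulliPowerSeries, coeff_mk, Algebra.algebraMap_self, RingHom.id_apply] at hco
  rw [Finset.Nat.sum_antidiagonal_eq_sum_range_succ_mk] at hco
  have hterm : ∀ k ∈ Finset.range (m + 1 + 1),
      ((m + 1).choose k : ℚ) * bernoulli k * bernoulli (m + 1 - k)
        = (Nat.factorial (m + 1) : ℚ) * (bernoulli k / (Nat.factorial k) *
          (bernoulli (m + 1 - k) / (Nat.factorial (m + 1 - k)))) := by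
    intro k hk
    simp only [Finset.mem_range] at hk
    rw [Nat.cast_choose ℚ (by omega : k ≤ m + 1)]
    have h1 : (Nat.factorial k : ℚ) ≠ 0 := Nat.cast_ne_zero.2 (Nat.factorial_ne_zero k)
    have h2 : (Nat.factorial (m + 1 - k) : ℚ) ≠ 0 := Nat.cast_ne_zero.2 (Nat.factorial_ne_zero _)
    have h3 : (Nat.factorial (m + 1) : ℚ) ≠ 0 := Nat.cast_ne_zero.2 (Nat.factorial_ne_zero _)
    field_simp
    try ring
  rw [Finset.sum_congr rfl hterm, ← Finset.mul_sum, hco, Nat.add_sub_cancel]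
  have hfs : (Nat.factorial (m + 1) : ℚ) = ((m : ℚ) + 1) * Nat.factorial m := by
    push_cast [Nat.factorial_succ]
    try ring
  have h1 : (Nat.factorial m : ℚ) ≠ 0 := Nat.cast_ne_zero.2 (Nat.factorial_ne_zero m)
  have h2 : ((m : ℚ) + 1) ≠ 0 := by positivity
  rw [hfs]
  push_cast
  field_simp
  try ring

end Bernoulli

lemma bernoulli_even_conv (N : ℕ) (hN : 2 ≤ N) :
    ∑ i ∈ Finset.range (N - 1),
        (((2 * N).choose (2 * i + 2) : ℚ) * bernoulli (2 * i + 2) * bernoulli (2 * N - (2 * i + 2)))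
      = -(2 * (N : ℚ) + 1) * bernoulli (2 * N) := by
  classical
  have h := bernoulli_quadratic (2 * N) (by omega)
  have hodd : bernoulli (2 * N - 1) = 0 := by
    rw [bernoulli_eq_bernoulli'_of_ne_one (by omega)]
    exact bernoulli'_eq_zero_of_odd ⟨N - 1, by omega⟩ (by omega)
  rw [hodd, mul_zero, sub_zero] at h
  set c : ℕ → ℚ := fun k => ((2 * N).choose k : ℚ) * bernoulli k * bernoulli (2 * N - k) with hc_def
  have hsplit := Finset.sum_filter_add_sum_filter_not (Finset.range (2 * N + 1))
    (fun k => k % 2 = 0) c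
  have hoddsum : ∑ k ∈ (Finset.range (2 * N + 1)).filter (fun k => ¬ k % 2 = 0), c k = 0 := by
    apply Finset.sum_eq_zero
    intro k hk
    simp only [Finset.mem_filter, Finset.mem_range] at hk
    rcases eq_or_ne k 1 with h1 | h1
    · subst h1
      rw [hc_def]
      simp only
      rw [show 2 * N - 1 = 2 * N - 1 from rfl, hodd, mul_zero]
    · have hk3 : 3 ≤ k := by omega
      have : bernoulli k = 0 := by
        rw [bernoulli_eq_bernoulli'_of_ne_one (by omega)]
        exact bernoulli'_eq_zero_of_odd ⟨(k - 1) / 2, by omega⟩ (by omega)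
      rw [hc_def]
      simp only
      rw [this, mul_zero, zero_mul]
  have himg : (Finset.range (2 * N + 1)).filter (fun k => k % 2 = 0) =
      (Finset.range (N + 1)).image (fun j => 2 * j) := by
    ext k
    simp only [Finset.mem_filter, Finset.mem_range, Finset.mem_image]
    constructor
    · rintro ⟨hk1, hk2⟩
      exact ⟨k / 2, by omega, by omega⟩
    · rintro ⟨j, hj, rfl⟩
      omega
  have hinj : Set.InjOn (fun j => 2 * j) (Finset.range (N + 1)) := by
    intro a _ b _ hab
    have hab' : 2 * a = 2 * b := hab
    omega
  have heven : ∑ k ∈ (Finset.range (2 * N + 1)).filter (fun k => k % 2 = 0), c k =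
      ∑ j ∈ Finset.range (N + 1), c (2 * j) := by
    rw [himg, Finset.sum_image (fun a ha b hb hab => hinj ha hb hab)]
  have htot : ∑ j ∈ Finset.range (N + 1), c (2 * j) = (1 - 2 * (N : ℚ)) * bernoulli (2 * N) := by
    rw [← heven]
    have := hsplit
    rw [hoddsum, add_zero] at this
    rw [this, h]
    push_cast
    ring
  have hNsplit : ∑ j ∈ Finset.range (N + 1), c (2 * j) =
      (∑ i ∈ Finset.range (N - 1), c (2 * (i + 1))) + c 0 + c (2 * N) := by
    have e1 : N + 1 = (N - 1 + 1) + 1 := by omega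
    have e2 : 2 * (N - 1 + 1) = 2 * N := by omega
    rw [e1, Finset.sum_range_succ, Finset.sum_range_succ', e2]
    try norm_num
  have hc0 : c 0 = bernoulli (2 * N) := by
    rw [hc_def]; simp
  have hcN : c (2 * N) = bernoulli (2 * N) := by
    rw [hc_def]; simp
  have hgoal : ∀ i ∈ Finset.range (N - 1),
      (((2 * N).choose (2 * i + 2) : ℚ) * bernoulli (2 * i + 2) *
        bernoulli (2 * N - (2 * i + 2))) = c (2 * (i + 1)) := by
    intro i hi
    rw [hc_def]
    simp only
    congr 2 <;> omega
  rw [Finset.sum_congr rfl hgoal]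
  have := hNsplit
  rw [htot, hc0, hcN] at this
  linarith [this]

lemma zetav_even (j : ℕ) (hj : 1 ≤ j) :
    zetav (2 * j) = (-1 : ℝ) ^ (j + 1) * 2 ^ (2 * j - 1) * Real.pi ^ (2 * j) *
      (bernoulli (2 * j) : ℝ) / (Nat.factorial (2 * j)) := by
  rw [zetav_eq_nat (by omega)]
  exact (hasSum_zeta_nat (by omega : j ≠ 0)).tsum_eq

lemma zeta_prod_sum (N : ℕ) (hN : 2 ≤ N) :
    ∑ i ∈ Finset.range (N - 1), zetav (2 * i + 2) * zetav (2 * N - (2 * i + 2))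
      = (2 * (N : ℝ) + 1) / 2 * zetav (2 * N) := by
  have hfacne : ∀ k : ℕ, (Nat.factorial k : ℝ) ≠ 0 :=
    fun k => Nat.cast_ne_zero.2 (Nat.factorial_ne_zero k)
  have hterm : ∀ i ∈ Finset.range (N - 1),
      zetav (2 * i + 2) * zetav (2 * N - (2 * i + 2)) =
        ((-1 : ℝ) ^ N * 2 ^ (2 * N - 2) * Real.pi ^ (2 * N) / (Nat.factorial (2 * N))) *
          ((((2 * N).choose (2 * i + 2) : ℚ) * bernoulli (2 * i + 2) *
            bernoulli (2 * N - (2 * i + 2)) : ℚ) : ℝ) := by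
    intro i hi
    simp only [Finset.mem_range] at hi
    obtain ⟨m', hm'⟩ : ∃ m', N - i - 1 = m' + 1 := ⟨N - i - 2, by omega⟩
    have hNe : N = i + m' + 2 := by omega
    subst hNe
    have e1 : 2 * (i + m' + 2) - (2 * i + 2) = 2 * (m' + 1) := by omega
    have e2 : 2 * i + 2 = 2 * (i + 1) := by omega
    rw [e1, e2, zetav_even (i + 1) (by omega), zetav_even (m' + 1) (by omega)]
    have e3 : 2 * (i + 1) - 1 = 2 * i + 1 := by omega
    have e4 : 2 * (m' + 1) - 1 = 2 * m' + 1 := by omega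
    have e5 : 2 * (i + m' + 2) - 2 = 2 * i + 2 * m' + 2 := by omega
    rw [e3, e4, e5]
    have hch : (((2 * (i + m' + 2)).choose (2 * (i + 1)) : ℕ) : ℝ) =
        (Nat.factorial (2 * (i + m' + 2))) /
          ((Nat.factorial (2 * (i + 1))) * (Nat.factorial (2 * (m' + 1)))) := by
      rw [Nat.cast_choose ℝ (by omega : 2 * (i + 1) ≤ 2 * (i + m' + 2)),
        show 2 * (i + m' + 2) - 2 * (i + 1) = 2 * (m' + 1) by omega]
    push_cast
    rw [hch]
    have f1 := hfacne (2 * (i + 1))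
    have f2 := hfacne (2 * (m' + 1))
    have f3 := hfacne (2 * (i + m' + 2))
    field_simp
    ring
  rw [Finset.sum_congr rfl hterm, ← Finset.mul_sum, ← Rat.cast_sum, bernoulli_even_conv N hN]
  rw [zetav_even N (by omega)]
  have e6 : 2 * N - 1 = (2 * N - 2) + 1 := by omega
  rw [e6, pow_succ, pow_succ]
  push_cast
  have f3 := hfacne (2 * N)
  field_simp

end DZ


open DZ in
theorem stmt2 (l : ℕ) (hl : 4 ≤ l) (hev : l % 2 = 0) :
    ∑ l₁ ∈ (Finset.Icc 2 (l - 1)).filter (fun l₁ => l₁ % 2 = 1 ∧ (l - l₁) % 2 = 1),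
      dzeta l₁ (l - l₁) = (1 / 4) * zetav l := by
  classical
  set N : ℕ := l / 2 with hN
  have hl2 : l = 2 * N := by omega
  have hN2 : 2 ≤ N := by omega
  have hfilters : (Finset.Icc 2 (l - 1)).filter (fun a => ¬(a % 2 = 1 ∧ (l - a) % 2 = 1)) =
      (Finset.range (N - 1)).image (fun i => 2 * i + 2) := by
    ext a
    simp only [Finset.mem_filter, Finset.mem_Icc, Finset.mem_image, Finset.mem_range]
    constructor
    · rintro ⟨⟨h1, h2⟩, h3⟩
      exact ⟨(a - 2) / 2, by omega, by omega⟩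
    · rintro ⟨i, hi, rfl⟩
      omega
  have hinj : ∀ x ∈ Finset.range (N - 1), ∀ y ∈ Finset.range (N - 1),
      2 * x + 2 = 2 * y + 2 → x = y := fun x _ y _ h => by omega
  have hsum_split := Finset.sum_filter_add_sum_filter_not (Finset.Icc 2 (l - 1))
    (fun a => a % 2 = 1 ∧ (l - a) % 2 = 1) (fun a => dzeta a (l - a))
  rw [sum_formula l hl] at hsum_split
  set Se : ℝ := ∑ i ∈ Finset.range (N - 1), dzeta (2 * i + 2) (l - (2 * i + 2)) with hSe
  have hSe' : ∑ a ∈ (Finset.Icc 2 (l - 1)).filter (fun a => ¬(a % 2 = 1 ∧ (l - a) % 2 = 1)),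
      dzeta a (l - a) = Se := by
    rw [hfilters, Finset.sum_image hinj]
  have hterm2 : ∀ i ∈ Finset.range (N - 1),
      zetav (2 * i + 2) * zetav (2 * N - (2 * i + 2)) =
        dzeta (2 * i + 2) (l - (2 * i + 2)) + dzeta (l - (2 * i + 2)) (2 * i + 2) + zetav l := by
    intro i hi
    simp only [Finset.mem_range] at hi
    have e1 : 2 * N - (2 * i + 2) = l - (2 * i + 2) := by omega
    rw [e1]
    have hst := stuffle (a := 2 * i + 2) (b := l - (2 * i + 2)) (by omega) (by omega)
    rw [show (2 * i + 2) + (l - (2 * i + 2)) = l from by omega] at hst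
    exact hst
  have hrefl : ∑ i ∈ Finset.range (N - 1), dzeta (l - (2 * i + 2)) (2 * i + 2) = Se := by
    have hr := Finset.sum_range_reflect (fun i => dzeta (l - (2 * i + 2)) (2 * i + 2)) (N - 1)
    rw [hSe, ← hr]
    refine Finset.sum_congr rfl fun j hj => ?_
    simp only [Finset.mem_range] at hj
    rw [show l - (2 * (N - 1 - 1 - j) + 2) = 2 * j + 2 from by omega,
      show 2 * (N - 1 - 1 - j) + 2 = l - (2 * j + 2) from by omega]
  have hps := zeta_prod_sum N hN2
  rw [Finset.sum_congr rfl hterm2] at hps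
  rw [Finset.sum_add_distrib, Finset.sum_add_distrib, hrefl, Finset.sum_const,
    Finset.card_range, nsmul_eq_mul] at hps
  rw [← hl2] at hps
  have hcast : ((N - 1 : ℕ) : ℝ) = (N : ℝ) - 1 := by
    rw [Nat.cast_sub (by omega)]
    norm_num
  rw [hcast] at hps
  rw [hSe'] at hsum_split
  linarith [hps, hsum_split]
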